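/- arXiv:2009.08327 — 2 statements merged into one kernel-verified Lean document; each statement's English description precedes it below -/
import Mathlib

section
/- Let n ≥ 1 and let x_j = cos(jπ/n) for j = 0, ..., n be the Chebyshev points of the second kind. Then for every j ∈ {0,...,n}, the barycentric weight satisfies 1/Π_{k≠j}(x_j - x_k) = (-1)^j · δ_j · 2^{n-1}/n, where δ_j = 1/2 if j = 0 or j = n, and δ_j = 1 otherwise. -/
open Finset Real

lemma abs_one_sub_exp_mul_I (φ : ℝ) :
    ‖1 - Complex.exp (φ * Complex.I)‖ = 2 * |Real.sin (φ / 2)| := by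
  have h : (1 - Complex.exp (φ * Complex.I)) =
      Complex.mk (1 - Real.cos φ) (-Real.sin φ) := by
    rw [Complex.exp_mul_I]
    apply Complex.ext <;> simp [Complex.cos_ofReal_re, Complex.sin_ofReal_re]
  rw [h, Complex.norm_def, Complex.normSq_mk]
  have hc : Real.cos φ = 1 - 2 * Real.sin (φ / 2) ^ 2 := by
    have h2 := Real.cos_two_mul' (φ / 2)
    have h3 := Real.sin_sq_add_cos_sq (φ / 2)
    have : 2 * (φ / 2) = φ := by ring
    rw [this] at h2; linarith
  have hs := Real.sin_sq_add_cos_sq φ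
  have : (1 - Real.cos φ) * (1 - Real.cos φ) + -Real.sin φ * -Real.sin φ
      = (2 * |Real.sin (φ / 2)|) ^ 2 := by
    rw [mul_pow, sq_abs]; nlinarith [hs, hc]
  rw [this, Real.sqrt_sq (by positivity)]

lemma prod_sin_eq (n : ℕ) :
    ∏ k ∈ Finset.range n, Real.sin ((k + 1) * Real.pi / (n + 1)) = (n + 1) / 2 ^ n := by
  have hμ := Complex.isPrimitiveRoot_exp (n + 1) (Nat.succ_ne_zero n)
  have h := hμ.prod_one_sub_pow_eq_order
  have h2 := congrArg (‖·‖) h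
  rw [norm_prod] at h2
  have hterm : ∀ k ∈ Finset.range n,
      ‖1 - Complex.exp (2 * (π : ℂ) * Complex.I / (↑n + 1)) ^ (k + 1)‖ =
        2 * Real.sin ((k + 1) * π / (n + 1)) := by
    intro k hk
    have hk' : k < n := Finset.mem_range.mp hk
    have hexp : Complex.exp (2 * (π : ℂ) * Complex.I / (↑n + 1)) ^ (k + 1) =
        Complex.exp (((2 * π * (k + 1) / (n + 1) : ℝ) : ℂ) * Complex.I) := by
      rw [← Complex.exp_nat_mul]
      congr 1
      push_cast
      ring
    rw [hexp, abs_one_sub_exp_mul_I]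
    have harg : (2 * π * (k + 1) / (n + 1) : ℝ) / 2 = (k + 1) * π / (n + 1) := by ring
    rw [harg, abs_of_pos]
    apply Real.sin_pos_of_pos_of_lt_pi
    · positivity
    · rw [div_lt_iff₀ (by positivity)]
      have : (k : ℝ) + 1 < n + 1 := by exact_mod_cast Nat.succ_lt_succ hk'
      nlinarith [Real.pi_pos]
  push_cast at h2
  rw [Finset.prod_congr rfl hterm, Finset.prod_mul_distrib, Finset.prod_const,
    Finset.card_range] at h2
  have habs : ‖(n : ℂ) + 1‖ = (n : ℝ) + 1 := by
    rw [show ((n : ℂ) + 1) = ((n + 1 : ℕ) : ℂ) by push_cast; ring, Complex.norm_natCast]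
    push_cast; ring
  rw [habs] at h2
  rw [eq_div_iff (by positivity)]
  rw [mul_comm]; exact h2

/-- Salzer's formula for the barycentric weights at the Chebyshev points of the
second kind `x_j = cos(jπ/n)`:
`w_j = 1/∏_{k≠j}(x_j - x_k) = (-1)^j δ_j 2^{n-1}/n` with `δ_0 = δ_n = 1/2`,
`δ_j = 1` otherwise. -/
theorem barycentric_weights_chebyshev_second_kind
    (n : ℕ) (hn : 1 ≤ n) (x : ℕ → ℝ)
    (hx : ∀ j, x j = Real.cos (j * Real.pi / n)) :
    ∀ j ≤ n,
      1 / ∏ k ∈ (Finset.range (n + 1)).erase j, (x j - x k) =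
        (-1 : ℝ) ^ j * (if j = 0 ∨ j = n then (1 : ℝ) / 2 else 1) * 2 ^ (n - 1) / n := by
  intro j hj
  have hnR : (0 : ℝ) < n := by exact_mod_cast hn
  set s : ℕ → ℝ := fun m => Real.sin (m * π / (2 * n)) with hs_def
  -- basic facts
  have hrefl : ∀ m : ℕ, m ≤ 2 * n → s (2 * n - m) = s m := by
    intro m hm
    simp only [hs_def]
    have hc : ((2 * n - m : ℕ) : ℝ) = 2 * (n : ℝ) - m := by
      push_cast [hm]; ring
    rw [hc]
    have : (2 * (n : ℝ) - m) * π / (2 * n) = π - m * π / (2 * n) := by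
      field_simp
    rw [this, Real.sin_pi_sub]
  have hsn : s n = 1 := by
    simp only [hs_def]
    have : (n : ℝ) * π / (2 * n) = π / 2 := by field_simp
    rw [this, Real.sin_pi_div_two]
  have hspos : ∀ m : ℕ, 1 ≤ m → m < 2 * n → 0 < s m := by
    intro m h1 h2
    have hm : (1 : ℝ) ≤ m := by exact_mod_cast h1
    have hm2 : (m : ℝ) < 2 * n := by exact_mod_cast h2
    apply Real.sin_pos_of_pos_of_lt_pi
    · have : (0:ℝ) < m := by linarith
      positivity
    · rw [div_lt_iff₀ (by positivity)]
      nlinarith [Real.pi_pos]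
  -- reflected products
  have hreflI : ∀ a b : ℕ, b ≤ 2 * n + 1 →
      ∏ m ∈ Finset.Ico a b, s m = ∏ m ∈ Finset.Ico (2*n+1-b) (2*n+1-a), s m := by
    intro a b hb
    rw [← Finset.prod_Ico_reflect s a hb]
    apply Finset.prod_congr rfl
    intro m hm
    have : m ≤ 2 * n := by
      have := (Finset.mem_Ico.mp hm).2; omega
    exact (hrefl m this).symm
  set Q : ℝ := ∏ m ∈ Finset.Ico 1 n, s m with hQ_def
  have hQpos : 0 < Q := by
    apply Finset.prod_pos
    intro m hm
    rw [Finset.mem_Ico] at hm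
    exact hspos m hm.1 (by omega)
  have hQ1 : ∏ m ∈ Finset.Ico 1 (n + 1), s m = Q := by
    rw [Finset.prod_Ico_succ_top hn, hsn, mul_one]
  have hQsq : Q ^ 2 = 2 * n / 2 ^ (2 * n - 1) := by
    have h1 : ∏ m ∈ Finset.Ico 1 (2 * n), s m = 2 * n / 2 ^ (2 * n - 1) := by
      have h0 := prod_sin_eq (2 * n - 1)
      have hcast : ((2 * n - 1 : ℕ) : ℝ) + 1 = 2 * n := by
        have : ((2 * n - 1 : ℕ) : ℝ) = 2 * n - 1 := by
          push_cast [Nat.cast_sub (by omega : 1 ≤ 2 * n)]; ring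
        rw [this]; ring
      rw [hcast] at h0
      rw [Finset.prod_Ico_eq_prod_range, ← h0]
      apply Finset.prod_congr rfl
      intro k _
      simp only [hs_def]
      congr 2
      push_cast; ring
    have hsplit := Finset.prod_Ico_consecutive s (by omega : 1 ≤ n + 1) (by omega : n + 1 ≤ 2 * n)
    have hre := hreflI (n + 1) (2 * n) (by omega)
    have e1 : 2 * n + 1 - 2 * n = 1 := by omega
    have e2 : 2 * n + 1 - (n + 1) = n := by omega
    rw [e1, e2] at hre
    rw [← hsplit, hQ1, hre, ← hQ_def] at h1
    rw [sq]; exact h1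
  -- split the erase-product
  have hsetsplit : (Finset.range (n + 1)).erase j =
      Finset.Ico 0 j ∪ Finset.Ico (j + 1) (n + 1) := by
    ext m
    simp only [Finset.mem_erase, Finset.mem_range, Finset.mem_union, Finset.mem_Ico]
    omega
  have hdisj : Disjoint (Finset.Ico 0 j) (Finset.Ico (j + 1) (n + 1)) := by
    simp only [Finset.disjoint_left, Finset.mem_Ico]
    omega
  have hPsplit : ∏ k ∈ (Finset.range (n + 1)).erase j, (x j - x k) =
      (∏ k ∈ Finset.Ico 0 j, (x j - x k)) * ∏ k ∈ Finset.Ico (j + 1) (n + 1), (x j - x k) := by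
    rw [hsetsplit, Finset.prod_union hdisj]
  -- pointwise formulas
  have hlow : ∀ k ∈ Finset.Ico 0 j, x j - x k = (-2) * (s (j + k) * s (j - k)) := by
    intro k hk
    have hkj : k < j := (Finset.mem_Ico.mp hk).2
    rw [hx, hx, Real.cos_sub_cos]
    simp only [hs_def]
    have e1 : ((j : ℝ) * π / n + k * π / n) / 2 = ((j + k : ℕ) : ℝ) * π / (2 * n) := by
      push_cast; field_simp
    have e2 : ((j : ℝ) * π / n - k * π / n) / 2 = ((j - k : ℕ) : ℝ) * π / (2 * n) := by
      push_cast [Nat.cast_sub hkj.le]; field_simp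
    rw [e1, e2]; ring
  have hhigh : ∀ k ∈ Finset.Ico (j + 1) (n + 1), x j - x k = 2 * (s (j + k) * s (k - j)) := by
    intro k hk
    have hkj : j < k := (Finset.mem_Ico.mp hk).1
    rw [hx, hx, Real.cos_sub_cos]
    simp only [hs_def]
    have e1 : ((j : ℝ) * π / n + k * π / n) / 2 = ((j + k : ℕ) : ℝ) * π / (2 * n) := by
      push_cast; field_simp
    have e2 : ((j : ℝ) * π / n - k * π / n) / 2 = -(((k - j : ℕ) : ℝ) * π / (2 * n)) := by
      push_cast [Nat.cast_sub hkj.le]; field_simp; ring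
    rw [e1, e2, Real.sin_neg]; ring
  -- the four basic products
  have hP1 : ∏ k ∈ Finset.Ico 0 j, (x j - x k) =
      (-1) ^ j * 2 ^ j * ((∏ m ∈ Finset.Ico j (2 * j), s m) * ∏ m ∈ Finset.Ico 1 (j + 1), s m) := by
    rw [Finset.prod_congr rfl hlow, Finset.prod_mul_distrib, Finset.prod_const, Finset.prod_mul_distrib]
    have hcard : (Finset.Ico 0 j).card = j := by simp
    rw [hcard]
    have hA : ∏ k ∈ Finset.Ico 0 j, s (j + k) = ∏ m ∈ Finset.Ico j (2 * j), s m := by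
      conv_rhs => rw [Finset.prod_Ico_eq_prod_range]
      have e : 2 * j - j = j := by omega
      rw [e, Nat.Ico_zero_eq_range]
    have hB : ∏ k ∈ Finset.Ico 0 j, s (j - k) = ∏ m ∈ Finset.Ico 1 (j + 1), s m := by
      conv_rhs => rw [Finset.prod_Ico_eq_prod_range]
      have e : j + 1 - 1 = j := by omega
      rw [e, Nat.Ico_zero_eq_range, ← Finset.prod_range_reflect (fun i => s (1 + i)) j]
      apply Finset.prod_congr rfl
      intro k hk
      have hkj : k < j := Finset.mem_range.mp hk
      congr 1
      omega
    rw [hA, hB]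
    have : (-2 : ℝ) ^ j = (-1) ^ j * 2 ^ j := by
      rw [← neg_one_mul, mul_pow]
    rw [this]
  have hP2 : ∏ k ∈ Finset.Ico (j + 1) (n + 1), (x j - x k) =
      2 ^ (n - j) * ((∏ m ∈ Finset.Ico (2 * j + 1) (n + j + 1), s m) *
        ∏ m ∈ Finset.Ico 1 (n - j + 1), s m) := by
    rw [Finset.prod_congr rfl hhigh, Finset.prod_mul_distrib, Finset.prod_const, Finset.prod_mul_distrib]
    have hcard : (Finset.Ico (j + 1) (n + 1)).card = n - j := by
      rw [Nat.card_Ico]; omega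
    rw [hcard]
    have hA : ∏ k ∈ Finset.Ico (j + 1) (n + 1), s (j + k)
        = ∏ m ∈ Finset.Ico (2 * j + 1) (n + j + 1), s m := by
      rw [Finset.prod_Ico_eq_prod_range, Finset.prod_Ico_eq_prod_range]
      have e : n + j + 1 - (2 * j + 1) = n + 1 - (j + 1) := by omega
      rw [e]
      apply Finset.prod_congr rfl
      intro k _
      congr 1
      omega
    have hB : ∏ k ∈ Finset.Ico (j + 1) (n + 1), s (k - j)
        = ∏ m ∈ Finset.Ico 1 (n - j + 1), s m := by
      rw [Finset.prod_Ico_eq_prod_range, Finset.prod_Ico_eq_prod_range]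
      have e : n - j + 1 - 1 = n + 1 - (j + 1) := by omega
      rw [e]
      apply Finset.prod_congr rfl
      intro k _
      congr 1
      omega
    rw [hA, hB]
  -- assemble
  rw [hPsplit, hP1, hP2]
  have hpow : (2:ℝ) ^ j * 2 ^ (n - j) = 2 ^ n := by
    rw [← pow_add]; congr 1; omega
  have hcomb : ∀ a b c d : ℝ,
      ((-1:ℝ) ^ j * 2 ^ j * (a * b)) * (2 ^ (n - j) * (c * d)) =
        (-1) ^ j * (2 ^ j * 2 ^ (n - j)) * (a * b * (c * d)) := by
    intros; ring
  rw [hcomb, hpow]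
  have hn0 : (n : ℝ) ≠ 0 := ne_of_gt hnR
  have htne : ((2:ℝ) ^ (n - 1)) ≠ 0 := by positivity
  have h22 : (2:ℝ) ^ (2 * n - 1) = 2 ^ (n - 1) * 2 ^ (n - 1) * 2 := by
    rw [← pow_add, ← pow_succ]; congr 1; omega
  have h2n : (2:ℝ) ^ n = 2 ^ (n - 1) * 2 := by
    rw [← pow_succ]; congr 1; omega
  by_cases hj0 : j = 0
  · subst hj0
    simp only [Finset.Ico_self, Finset.prod_empty, Nat.mul_zero, Nat.zero_add,
      Nat.sub_zero, pow_zero, one_mul, mul_one, Nat.add_zero]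
    rw [hQ1]
    rw [if_pos (Or.inl trivial)]
    have : Q * Q = Q ^ 2 := by ring
    rw [this, hQsq, h22, h2n]
    field_simp
  · by_cases hjn : j = n
    · subst hjn
      have e3 : j + j + 1 = 2 * j + 1 := by omega
      have e4 : j - j + 1 = 1 := by omega
      rw [e3, e4]
      simp only [Finset.Ico_self, Finset.prod_empty, mul_one]
      have hA1 : ∏ m ∈ Finset.Ico j (2 * j), s m = Q := by
        rw [Finset.prod_eq_prod_Ico_succ_bot (by omega : j < 2 * j), hsn, one_mul]
        have hre := hreflI (j + 1) (2 * j) (by omega)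
        have e1 : 2 * j + 1 - 2 * j = 1 := by omega
        have e2 : 2 * j + 1 - (j + 1) = j := by omega
        rw [e1, e2] at hre
        rw [hre]
      rw [hA1, hQ1]
      simp only [or_true, if_true]
      have : Q * Q = Q ^ 2 := by ring
      rw [this, hQsq, h22]
      rcases Nat.even_or_odd j with hpar | hpar
      · rw [hpar.neg_one_pow]
        field_simp
        simp only [pow_mul, h2n]
        ring
      · rw [hpar.neg_one_pow]
        field_simp
        simp only [pow_mul, h2n]
        ring
    · -- interior case
      have hj1 : 1 ≤ j := by omega
      have hjn1 : j ≤ n - 1 := by omega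
      rw [if_neg (by tauto)]
      have h2j : s (2 * j) ≠ 0 := ne_of_gt (hspos _ (by omega) (by omega))
      set A1 := ∏ m ∈ Finset.Ico j (2 * j), s m with hA1_def
      set A2 := ∏ m ∈ Finset.Ico 1 (j + 1), s m with hA2_def
      set A3 := ∏ m ∈ Finset.Ico (2 * j + 1) (n + j + 1), s m with hA3_def
      set A4 := ∏ m ∈ Finset.Ico 1 (n - j + 1), s m with hA4_def
      -- combine A1, s(2j), A3 into one block
      have hblock : A1 * s (2 * j) * A3 = ∏ m ∈ Finset.Ico j (n + j + 1), s m := by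
        rw [hA1_def, hA3_def, ← Finset.prod_Ico_succ_top (by omega : j ≤ 2 * j)]
        exact Finset.prod_Ico_consecutive s (by omega : j ≤ 2 * j + 1) (by omega : 2 * j + 1 ≤ n + j + 1)
      have hsplit2 : ∏ m ∈ Finset.Ico j (n + j + 1), s m =
          (∏ m ∈ Finset.Ico j (n + 1), s m) * ∏ m ∈ Finset.Ico (n - j) n, s m := by
        rw [← Finset.prod_Ico_consecutive s (by omega : j ≤ n + 1) (by omega : n + 1 ≤ n + j + 1)]
        congr 1
        have hre := hreflI (n + 1) (n + j + 1) (by omega)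
        have e1 : 2 * n + 1 - (n + j + 1) = n - j := by omega
        have e2 : 2 * n + 1 - (n + 1) = n := by omega
        rw [e1, e2] at hre
        exact hre
      have hA2' : A2 * ∏ m ∈ Finset.Ico j (n + 1), s m = s j * Q := by
        rw [Finset.prod_eq_prod_Ico_succ_bot (by omega : j < n + 1) s]
        rw [hA2_def, ← hQ1,
          ← Finset.prod_Ico_consecutive s (by omega : 1 ≤ j + 1) (by omega : j + 1 ≤ n + 1)]
        ring
      have hA4' : A4 * ∏ m ∈ Finset.Ico (n - j) n, s m = s (n - j) * Q := by
        rw [Finset.prod_eq_prod_Ico_succ_bot (by omega : n - j < n) s]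
        rw [hA4_def, hQ_def,
          ← Finset.prod_Ico_consecutive s (by omega : 1 ≤ n - j + 1) (by omega : n - j + 1 ≤ n)]
        ring
      have hdouble : 2 * (s j * s (n - j)) = s (2 * j) := by
        simp only [hs_def]
        have hc : ((n - j : ℕ) : ℝ) = (n : ℝ) - j := by push_cast [Nat.cast_sub hj]; ring
        rw [hc]
        have e1 : ((n : ℝ) - j) * π / (2 * n) = π / 2 - j * π / (2 * n) := by
          field_simp
        rw [e1, Real.sin_pi_div_two_sub]
        have e2 : ((2 * j : ℕ) : ℝ) * π / (2 * n) = 2 * ((j : ℝ) * π / (2 * n)) := by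
          push_cast; ring
        rw [e2, Real.sin_two_mul]
        ring
      have hT : A1 * A2 * (A3 * A4) = Q ^ 2 / 2 := by
        have key : (A1 * A2 * (A3 * A4)) * s (2 * j) = (Q ^ 2 / 2) * s (2 * j) := by
          calc (A1 * A2 * (A3 * A4)) * s (2 * j)
              = (A1 * s (2 * j) * A3) * A2 * A4 := by ring
            _ = ((∏ m ∈ Finset.Ico j (n + 1), s m) * ∏ m ∈ Finset.Ico (n - j) n, s m)
                  * A2 * A4 := by rw [hblock, hsplit2]
            _ = (A2 * ∏ m ∈ Finset.Ico j (n + 1), s m) *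
                  (A4 * ∏ m ∈ Finset.Ico (n - j) n, s m) := by ring
            _ = (s j * Q) * (s (n - j) * Q) := by rw [hA2', hA4']
            _ = Q ^ 2 / 2 * (2 * (s j * s (n - j))) := by ring
            _ = Q ^ 2 / 2 * s (2 * j) := by rw [hdouble]
        exact mul_right_cancel₀ h2j key
      rw [hT, hQsq, h22]
      rcases Nat.even_or_odd j with hpar | hpar
      · rw [hpar.neg_one_pow]
        field_simp
        simp only [pow_mul, h2n]
        ring
      · rw [hpar.neg_one_pow]
        field_simp
        simp only [pow_mul, h2n]
        ring
end

section
/- Let n ≥ 0 and let x_j = cos((2j+1)π/(2n+2)) for j = 0, ..., n be the Chebyshev points of the first kind. Then for every j ∈ {0,...,n}, the barycentric weight satisfies 1/Π_{k≠j}(x_j - x_k) = (-1)^j · sin((2j+1)π/(2n+2)) · 2^n/(n+1). -/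
open Finset Real

section BarycentricAux

open Polynomial Polynomial.Chebyshev

private lemma bary_T_stmt (m : ℕ) : (T ℝ m).natDegree ≤ m ∧
    (T ℝ m).coeff m = (if m = 0 then 1 else 2^(m-1) : ℝ) := by
  induction m using Nat.twoStepInduction with
  | zero => simp [T_zero]
  | one => simp [T_one]
  | more m ih ih1 =>
    have hrec : T ℝ (m+2 : ℕ) = 2 * X * T ℝ (m+1 : ℕ) - T ℝ m := by
      have := T_add_two ℝ (m : ℤ)
      push_cast
      push_cast at this
      exact this
    have h1 : (2 * X : ℝ[X]).natDegree ≤ 1 := by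
      refine natDegree_mul_le.trans ?_; simp
    constructor
    · rw [hrec]
      refine (natDegree_sub_le _ _).trans (max_le ?_ (ih.1.trans (by omega)))
      refine natDegree_mul_le.trans ?_
      have := ih1.1
      omega
    · rw [hrec, coeff_sub, coeff_eq_zero_of_natDegree_lt (lt_of_le_of_lt ih.1 (by omega))]
      have h2 : (2 * X * T ℝ (m+1:ℕ)) = C 2 * (X * T ℝ (m+1:ℕ)) := by
        rw [← mul_assoc, show (2:ℝ[X]) = C 2 from (C_eq_natCast 2).symm.trans (by norm_num)]
      rw [h2, coeff_C_mul, show m + 2 = (m+1) + 1 from rfl, coeff_X_mul, ih1.2]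
      simp [pow_succ]
      ring

private noncomputable def baryθ (n j : ℕ) : ℝ := (2 * j + 1) * Real.pi / (2 * n + 2)

private lemma bary_theta_mem {n j : ℕ} (hj : j ≤ n) : baryθ n j ∈ Set.Ioo 0 Real.pi := by
  unfold baryθ
  constructor
  · positivity
  · rw [div_lt_iff₀ (by positivity)]
    have hj' : (j:ℝ) ≤ n := by exact_mod_cast hj
    nlinarith [Real.pi_pos]

private lemma bary_x_injOn (n : ℕ) (x : ℕ → ℝ) (hx : ∀ j, x j = Real.cos (baryθ n j)) :
    Set.InjOn x (Finset.range (n+1) : Set ℕ) := by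
  intro a ha b hb hab
  simp only [Finset.coe_range, Set.mem_Iio] at ha hb
  have ha' := bary_theta_mem (n := n) (j := a) (by omega)
  have hb' := bary_theta_mem (n := n) (j := b) (by omega)
  have := Real.injOn_cos (Set.mem_Icc.2 ⟨ha'.1.le, ha'.2.le⟩)
    (Set.mem_Icc.2 ⟨hb'.1.le, hb'.2.le⟩) (by rw [← hx, ← hx] ; exact hab)
  unfold baryθ at this
  field_simp at this
  have h : (a:ℝ) = b := by linarith
  exact_mod_cast h

private lemma bary_n1_theta (n j : ℕ) :
    ((n:ℝ) + 1) * baryθ n j = (2 * j + 1) * (Real.pi / 2) := by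
  unfold baryθ
  have : (2 * (n:ℝ) + 2) ≠ 0 := by positivity
  field_simp

private lemma bary_cos_n1_theta (n j : ℕ) : Real.cos (((n:ℝ) + 1) * baryθ n j) = 0 := by
  rw [bary_n1_theta, Real.cos_eq_zero_iff]
  exact ⟨j, by push_cast; ring⟩

private lemma bary_sin_n1_theta (n j : ℕ) :
    Real.sin (((n:ℝ) + 1) * baryθ n j) = (-1)^j := by
  rw [bary_n1_theta]
  have : (2 * (j:ℝ) + 1) * (Real.pi/2) = Real.pi/2 + j * Real.pi := by ring
  rw [this, Real.sin_add_nat_mul_pi]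
  simp

private lemma bary_cheb_factor (n : ℕ) (x : ℕ → ℝ) (hx : ∀ j, x j = Real.cos (baryθ n j)) :
    T ℝ (n + 1 : ℕ) = C ((2:ℝ)^n) * ∏ k ∈ Finset.range (n+1), (X - C (x k)) := by
  set P : ℝ[X] := ∏ k ∈ Finset.range (n+1), (X - C (x k)) with hP
  have hPmonic : P.Monic := monic_prod_of_monic _ _ (fun k _ => monic_X_sub_C _)
  have hPdeg : P.natDegree = n + 1 := by
    rw [hP, natDegree_prod _ _ (fun k _ => X_sub_C_ne_zero _)]
    simp
  set q : ℝ[X] := T ℝ (n + 1 : ℕ) - C ((2:ℝ)^n) * P with hq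
  have hqdeg : q.natDegree ≤ n := by
    rw [natDegree_le_iff_coeff_eq_zero]
    intro N hN
    rw [hq, coeff_sub, coeff_C_mul]
    rcases eq_or_lt_of_le (Nat.succ_le_of_lt hN) with h | h
    · have hc : P.coeff (n+1) = 1 := by
        have := hPmonic.coeff_natDegree
        rwa [hPdeg] at this
      rw [← h, (bary_T_stmt (n+1)).2]
      simp only [Nat.succ_eq_add_one] at hc ⊢
      rw [hc]
      simp
    · rw [coeff_eq_zero_of_natDegree_lt (lt_of_le_of_lt (bary_T_stmt (n+1)).1 h),
        coeff_eq_zero_of_natDegree_lt (by omega : P.natDegree < N)]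
      ring
  have hroots : ∀ j ∈ Finset.range (n+1), q.eval (x j) = 0 := by
    intro j hj
    have hT : (T ℝ ((n+1:ℕ) : ℤ)).eval (x j) = 0 := by
      rw [hx j, T_real_cos]
      have : ((((n+1:ℕ):ℤ)):ℝ) * baryθ n j = ((n:ℝ)+1) * baryθ n j := by push_cast; ring
      rw [this, bary_cos_n1_theta]
    rw [hq, eval_sub, eval_mul, eval_C, hT, hP, eval_prod,
      Finset.prod_eq_zero hj (by simp)]
    ring
  have hcard : q = 0 := by
    apply Polynomial.eq_zero_of_natDegree_lt_card_of_eval_eq_zero' q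
      ((Finset.range (n+1)).image x)
      (by intro i hi; obtain ⟨j, hj, rfl⟩ := Finset.mem_image.1 hi; exact hroots j hj)
    rw [Finset.card_image_of_injOn (bary_x_injOn n x hx)]
    simp
    omega
  exact sub_eq_zero.1 hcard

private lemma bary_prod_eq (n j : ℕ) (x : ℕ → ℝ) (hj : j ≤ n)
    (hx : ∀ k, x k = Real.cos (baryθ n k)) :
    ((n:ℝ)+1) * ((-1:ℝ)^j / Real.sin (baryθ n j)) =
      2^n * ∏ k ∈ (Finset.range (n+1)).erase j, (x j - x k) := by
  have hmem := bary_theta_mem (n := n) (j := j) hj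
  have hsinpos : 0 < Real.sin (baryθ n j) := Real.sin_pos_of_pos_of_lt_pi hmem.1 hmem.2
  have hsinval := bary_sin_n1_theta n j
  have cheb := bary_cheb_factor n x hx
  have hjmem : j ∈ Finset.range (n+1) := by simp; omega
  set Q : ℝ[X] := ∏ k ∈ (Finset.range (n+1)).erase j, (X - C (x k)) with hQ
  have hPQ : ∏ k ∈ Finset.range (n+1), (X - C (x k)) = (X - C (x j)) * Q :=
    (Finset.mul_prod_erase _ _ hjmem).symm
  have hder := congrArg derivative cheb
  rw [hPQ, derivative_C_mul, derivative_mul, derivative_sub, derivative_X, derivative_C,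
    T_derivative_eq_U] at hder
  have hev := congrArg (Polynomial.eval (x j)) hder
  simp only [eval_mul, eval_add, eval_C, eval_sub, eval_X, eval_intCast, sub_zero, one_mul]
    at hev
  rw [sub_self, zero_mul, add_zero] at hev
  have hUval : (U ℝ (n:ℤ)).eval (x j) * Real.sin (baryθ n j) = (-1:ℝ)^j := by
    rw [hx j, U_real_cos]
    rw [show (((n:ℤ):ℝ) + 1) = ((n:ℝ)+1) by push_cast; ring]
    exact hsinval
  have hcast : ((n + 1 : ℕ) : ℤ) - 1 = (n : ℤ) := by push_cast; ring
  rw [hcast] at hev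
  have hQev : Q.eval (x j) = ∏ k ∈ (Finset.range (n+1)).erase j, (x j - x k) := by
    rw [hQ, eval_prod]; simp
  rw [hQev] at hev
  have hcast2 : (((n+1:ℕ):ℤ) : ℝ) = (n:ℝ)+1 := by push_cast; ring
  rw [hcast2] at hev
  have hsne : Real.sin (baryθ n j) ≠ 0 := ne_of_gt hsinpos
  field_simp
  nlinarith [hev, hUval, hsinpos]

end BarycentricAux

/-- Barycentric weights at the Chebyshev points of the first kind
`x_j = cos((2j+1)π/(2n+2))`:
`w_j = 1/∏_{k≠j}(x_j - x_k) = (-1)^j sin((2j+1)π/(2n+2)) · 2^n/(n+1)`. -/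
theorem barycentric_weights_chebyshev_first_kind
    (n : ℕ) (x : ℕ → ℝ)
    (hx : ∀ j, x j = Real.cos ((2 * j + 1) * Real.pi / (2 * n + 2))) :
    ∀ j ≤ n,
      1 / ∏ k ∈ (Finset.range (n + 1)).erase j, (x j - x k) =
        (-1 : ℝ) ^ j * Real.sin ((2 * j + 1) * Real.pi / (2 * n + 2)) * 2 ^ n / (n + 1) := by
  intro j hj
  have hx' : ∀ k, x k = Real.cos (baryθ n k) := hx
  have key := bary_prod_eq n j x hj hx'
  have hmem := bary_theta_mem (n := n) (j := j) hj
  have hsinpos : 0 < Real.sin (baryθ n j) := Real.sin_pos_of_pos_of_lt_pi hmem.1 hmem.2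
  have hsne : Real.sin (baryθ n j) ≠ 0 := ne_of_gt hsinpos
  have hθ : (2 * (j:ℝ) + 1) * Real.pi / (2 * n + 2) = baryθ n j := rfl
  rw [hθ]
  have h1 : ((-1:ℝ)^j) * ((-1:ℝ)^j) = 1 := by
    rw [← pow_add, ← two_mul, pow_mul]
    norm_num
  have hne : ((-1:ℝ)^j) ≠ 0 := by
    intro h; rw [h] at h1; simp at h1
  have hprodval : ∏ k ∈ (Finset.range (n + 1)).erase j, (x j - x k)
      = ((n:ℝ)+1) * (-1:ℝ)^j / (2^n * Real.sin (baryθ n j)) := by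
    have h2 : (2:ℝ)^n ≠ 0 := by positivity
    field_simp
    field_simp at key
    linarith [key]
  rw [hprodval]
  have hn1 : ((n:ℝ)+1) ≠ 0 := by positivity
  rw [one_div_div]
  rw [div_eq_div_iff (mul_ne_zero hn1 hne) hn1]
  linear_combination (-(Real.sin (baryθ n j) * 2^n * ((n:ℝ)+1))) * h1
end
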